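/- In a finite Markov decision process, the k-persistent Bellman expectation operator T^π_k, defined by (T^π_k f)(s,a) = r_k(s,a) + γ^k (P^π_k f)(s,a) where P_k = (P^δ)^{k-1} P and r_k = ∑_{i=0}^{k-1} γ^i (P^δ)^i r, satisfies T^π_k = (T^δ)^{k-1} ∘ T^π, where T^π f = r + γ P^π f and T^δ f = r + γ P^δ f. -/

import Mathlib

theorem stmt_2 {S A : Type*} [Fintype S] [Fintype A]
    (P : S → A → S → ℝ) (r : S × A → ℝ) (γ : ℝ) (π : S → A → ℝ)
    (hγ0 : 0 ≤ γ) (hγ1 : γ < 1)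
    (hP0 : ∀ s a s', 0 ≤ P s a s') (hP1 : ∀ s a, ∑ s', P s a s' = 1)
    (hπ0 : ∀ s a, 0 ≤ π s a) (hπ1 : ∀ s, ∑ a, π s a = 1)
    (k : ℕ) (hk : 1 ≤ k)
    (Pπ : (S × A → ℝ) → (S × A → ℝ))
    (hPπ : ∀ f sa, Pπ f sa = ∑ s', P sa.1 sa.2 s' * ∑ a', π s' a' * f (s', a'))
    (Pδ : (S × A → ℝ) → (S × A → ℝ))
    (hPδ : ∀ f sa, Pδ f sa = ∑ s', P sa.1 sa.2 s' * f (s', sa.2))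
    (Tπ : (S × A → ℝ) → (S × A → ℝ)) (hTπ : ∀ f, Tπ f = r + γ • Pπ f)
    (Tδ : (S × A → ℝ) → (S × A → ℝ)) (hTδ : ∀ f, Tδ f = r + γ • Pδ f)
    (rk : S × A → ℝ) (hrk : rk = ∑ i ∈ Finset.range k, γ ^ i • Pδ^[i] r)
    (Tπk : (S × A → ℝ) → (S × A → ℝ))
    (hTπk : ∀ f, Tπk f = rk + γ ^ k • Pδ^[k - 1] (Pπ f)) :
    ∀ f : S × A → ℝ, Tπk f = Tδ^[k - 1] (Tπ f) := by
  have hadd : ∀ a b, Pδ (a + b) = Pδ a + Pδ b := by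
    intro a b; funext sa
    simp [hPδ, Pi.add_apply, mul_add, Finset.sum_add_distrib]
  have hsmul : ∀ (c : ℝ) a, Pδ (c • a) = c • Pδ a := by
    intro c a; funext sa
    simp only [hPδ, Pi.smul_apply, smul_eq_mul, Finset.mul_sum]
    exact Finset.sum_congr rfl fun s' _ => by ring
  have hsum : ∀ (n : ℕ) (g : ℕ → S × A → ℝ),
      Pδ (∑ i ∈ Finset.range n, g i) = ∑ i ∈ Finset.range n, Pδ (g i) := by
    intro n g
    induction n with
    | zero =>
      simp only [Finset.range_zero, Finset.sum_empty]
      funext sa; simp [hPδ]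
    | succ n ih =>
      rw [Finset.sum_range_succ, hadd, ih, Finset.sum_range_succ]
  intro f
  have key : ∀ m : ℕ, Tδ^[m] (Tπ f) =
      (∑ i ∈ Finset.range (m + 1), γ ^ i • Pδ^[i] r) + γ ^ (m + 1) • Pδ^[m] (Pπ f) := by
    intro m
    induction m with
    | zero => simp [hTπ]
    | succ m ih =>
      rw [Function.iterate_succ_apply', ih, hTδ, hadd, hsum, hsmul]
      have h1 : ∀ i, Pδ (γ ^ i • Pδ^[i] r) = γ ^ i • Pδ^[i + 1] r := by
        intro i; rw [hsmul, Function.iterate_succ_apply']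
      simp only [h1]
      rw [Finset.sum_range_succ' (fun i => γ ^ i • Pδ^[i] r) (m + 1)]
      funext sa
      simp only [Pi.add_apply, Pi.smul_apply, Finset.sum_apply, smul_eq_mul,
        Function.iterate_succ_apply', Function.iterate_zero_apply, pow_succ, pow_zero,
        Finset.mul_sum, Finset.sum_add_distrib]
      ring_nf
      have e : ∑ x ∈ Finset.range (1 + m), γ * γ ^ x * Pδ (Pδ^[x] r) sa
          = ∑ x ∈ Finset.range (1 + m), γ * (γ ^ x * Pδ (Pδ^[x] r) sa) :=
        Finset.sum_congr rfl fun x _ => by ring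
      rw [e, ← Finset.mul_sum]
      ring
  rw [hTπk, key (k - 1), hrk]
  have hk1 : k - 1 + 1 = k := Nat.succ_pred_eq_of_pos hk
  rw [hk1]
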